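/- Let μ₀ and ν₀ be Borel probability measures on ℝ. Suppose T, S : [0,∞) × ℝ → ℝ satisfy: T(0,x) = x and S(0,x) = x for all x; for each t ≥ 0 the maps T(t,·) and S(t,·) are Borel measurable and 2π-equivariant, i.e. T(t, x + 2π) = T(t,x) + 2π and S(t, x + 2π) = S(t,x) + 2π for all x; and for every x ∈ ℝ the maps t ↦ T(t,x) and t ↦ S(t,x) are differentiable with ∂ₜT(t,x) = ∫ h_β′(T(t,x) − T(t,y)) dμ₀(y) and ∂ₜS(t,x) = ∫ h_β′(S(t,x) − S(t,y)) dν₀(y). Then for every t ≥ 0, W₁(T(t,·)₊μ₀, S(t,·)₊ν₀) ≤ e^{2·C_β·t} · W₁(μ₀, ν₀), where T(t,·)₊μ₀ denotes the pushforward measure of μ₀ under T(t,·). (Dobrushin's stability estimate for the mean-field transformer dynamics on the circle, in Lagrangian form.) -/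

import Mathlib

open MeasureTheory Real Filter

/-- The interaction kernel `h_β(θ) = β⁻¹ exp(β cos θ)`. -/
noncomputable def hBeta (β : ℝ) : ℝ → ℝ := fun θ => β⁻¹ * Real.exp (β * Real.cos θ)

/-- Its derivative `h_β′`. -/
noncomputable def hBeta' (β : ℝ) : ℝ → ℝ := deriv (hBeta β)

/-- `C_β = sup_θ |h_β″(θ)|`. -/
noncomputable def CBeta (β : ℝ) : ℝ := ⨆ θ : ℝ, |deriv (hBeta' β) θ|

/-- Periodic Kantorovich–Rubinstein distance: sup over 2π-periodic 1-Lipschitz test functions. -/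
noncomputable def W1 (μ ν : Measure ℝ) : ℝ :=
  ⨆ f : {f : ℝ → ℝ // Function.Periodic f (2 * π) ∧ LipschitzWith 1 f},
    (∫ x, f.1 x ∂μ) - ∫ x, f.1 x ∂ν

lemma hasDerivAt_hBeta (β : ℝ) (hβ : β ≠ 0) (θ : ℝ) :
    HasDerivAt (hBeta β) (-Real.sin θ * Real.exp (β * Real.cos θ)) θ := by
  have h1 : HasDerivAt (fun θ : ℝ => β * Real.cos θ) (β * (-Real.sin θ)) θ :=
    (Real.hasDerivAt_cos θ).const_mul β
  have h2 := (h1.exp).const_mul β⁻¹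
  rw [show -Real.sin θ * Real.exp (β * Real.cos θ)
      = β⁻¹ * (Real.exp (β * Real.cos θ) * (β * -Real.sin θ)) by field_simp]
  exact h2

lemma hBeta'_eq (β : ℝ) (hβ : β ≠ 0) :
    hBeta' β = fun θ => -Real.sin θ * Real.exp (β * Real.cos θ) := by
  funext θ; exact (hasDerivAt_hBeta β hβ θ).deriv

lemma hasDerivAt_hBeta' (β : ℝ) (hβ : β ≠ 0) (θ : ℝ) :
    HasDerivAt (hBeta' β) ((β * Real.sin θ ^ 2 - Real.cos θ) * Real.exp (β * Real.cos θ)) θ := by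
  rw [hBeta'_eq β hβ]
  have h1 : HasDerivAt (fun θ : ℝ => -Real.sin θ) (-Real.cos θ) θ := (Real.hasDerivAt_sin θ).neg
  have h2 : HasDerivAt (fun θ : ℝ => Real.exp (β * Real.cos θ))
      (Real.exp (β * Real.cos θ) * (β * (-Real.sin θ))) θ :=
    ((Real.hasDerivAt_cos θ).const_mul β).exp
  rw [show (β * Real.sin θ ^ 2 - Real.cos θ) * Real.exp (β * Real.cos θ)
      = -Real.cos θ * Real.exp (β * Real.cos θ)
        + -Real.sin θ * (Real.exp (β * Real.cos θ) * (β * -Real.sin θ)) by ring]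
  exact h1.mul h2

lemma deriv_hBeta'_bound (β : ℝ) (hβ : 0 < β) (θ : ℝ) :
    |deriv (hBeta' β) θ| ≤ (β + 1) * Real.exp β := by
  rw [(hasDerivAt_hBeta' β hβ.ne' θ).deriv, abs_mul]
  have h1 : |β * Real.sin θ ^ 2 - Real.cos θ| ≤ β + 1 := by
    have := abs_sub (β * Real.sin θ ^ 2) (Real.cos θ)
    have h2 : |β * Real.sin θ ^ 2| ≤ β := by
      rw [abs_mul, abs_of_pos hβ]
      rw [abs_of_nonneg (sq_nonneg (Real.sin θ))]
      nlinarith [mul_le_mul_of_nonneg_left (Real.sin_sq_le_one θ) hβ.le]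
    have h3 : |Real.cos θ| ≤ 1 := Real.abs_cos_le_one θ
    calc |β * Real.sin θ ^ 2 - Real.cos θ| ≤ |β * Real.sin θ ^ 2| + |Real.cos θ| := abs_sub _ _
      _ ≤ β + 1 := add_le_add h2 h3
  have h2 : |Real.exp (β * Real.cos θ)| ≤ Real.exp β := by
    rw [abs_of_pos (Real.exp_pos _)]
    exact Real.exp_le_exp.2 (by nlinarith [Real.cos_le_one θ, Real.neg_one_le_cos θ])
  have hb1 : (0:ℝ) ≤ β + 1 := by linarith
  calc |β * Real.sin θ ^ 2 - Real.cos θ| * |Real.exp (β * Real.cos θ)|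
      ≤ (β + 1) * Real.exp β := by
        apply mul_le_mul h1 h2 (abs_nonneg _) hb1

lemma CBeta_bddAbove (β : ℝ) (hβ : 0 < β) :
    BddAbove (Set.range fun θ : ℝ => |deriv (hBeta' β) θ|) :=
  ⟨(β + 1) * Real.exp β, by rintro _ ⟨θ, rfl⟩; exact deriv_hBeta'_bound β hβ θ⟩

lemma abs_deriv_le_CBeta (β : ℝ) (hβ : 0 < β) (θ : ℝ) :
    |deriv (hBeta' β) θ| ≤ CBeta β :=
  le_ciSup (CBeta_bddAbove β hβ) θ

lemma CBeta_nonneg (β : ℝ) (hβ : 0 < β) : 0 ≤ CBeta β :=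
  le_trans (abs_nonneg _) (abs_deriv_le_CBeta β hβ 0)

lemma hBeta'_lip (β : ℝ) (hβ : 0 < β) (a b : ℝ) :
    |hBeta' β a - hBeta' β b| ≤ CBeta β * |a - b| := by
  have h := Convex.norm_image_sub_le_of_norm_hasDerivWithin_le
    (f := hBeta' β) (f' := deriv (hBeta' β)) (C := CBeta β) (s := Set.univ)
    (fun x _ => ((hasDerivAt_hBeta' β hβ.ne' x).deriv ▸
      (hasDerivAt_hBeta' β hβ.ne' x)).hasDerivWithinAt)
    (fun x _ => by rw [Real.norm_eq_abs]; exact abs_deriv_le_CBeta β hβ x)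
    convex_univ (Set.mem_univ b) (Set.mem_univ a)
  simpa [Real.norm_eq_abs] using h

lemma hBeta'_abs_le (β : ℝ) (hβ : 0 < β) (θ : ℝ) : |hBeta' β θ| ≤ Real.exp β := by
  rw [hBeta'_eq β hβ.ne', abs_mul, abs_neg]
  have h1 : |Real.sin θ| ≤ 1 := Real.abs_sin_le_one θ
  have h2 : |Real.exp (β * Real.cos θ)| ≤ Real.exp β := by
    rw [abs_of_pos (Real.exp_pos _)]
    exact Real.exp_le_exp.2 (by nlinarith [Real.cos_le_one θ])
  calc |Real.sin θ| * |Real.exp (β * Real.cos θ)| ≤ 1 * Real.exp β :=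
    mul_le_mul h1 h2 (abs_nonneg _) zero_le_one
  _ = Real.exp β := one_mul _

lemma hBeta'_periodic (β : ℝ) (hβ : 0 < β) : Function.Periodic (hBeta' β) (2 * π) := by
  intro x
  rw [hBeta'_eq β hβ.ne']
  simp [Real.sin_add_two_pi, Real.cos_add_two_pi]

lemma hBeta'_continuous (β : ℝ) (hβ : 0 < β) : Continuous (hBeta' β) := by
  rw [hBeta'_eq β hβ.ne']
  continuity

lemma periodic_lip_osc {f : ℝ → ℝ} (hp : Function.Periodic f (2 * π))
    (hl : LipschitzWith 1 f) (a b : ℝ) : |f a - f b| ≤ π := by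
  set k : ℤ := round ((b - a) / (2 * π)) with hk
  have h2π : (0:ℝ) < 2 * π := by positivity
  have hfb : f (b - k * (2 * π)) = f b := hp.sub_int_mul_eq k
  have hd : |a - (b - k * (2 * π))| ≤ π := by
    have h1 : |(b - a) / (2 * π) - k| ≤ 1 / 2 := abs_sub_round _
    have h2 : a - (b - k * (2 * π)) = -(((b - a) / (2 * π) - k) * (2 * π)) := by
      field_simp; ring
    rw [h2, abs_neg, abs_mul, abs_of_pos h2π]
    calc |(b - a) / (2 * π) - ↑k| * (2 * π) ≤ (1 / 2) * (2 * π) :=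
      mul_le_mul_of_nonneg_right h1 h2π.le
    _ = π := by ring
  have h3 := hl.dist_le_mul a (b - k * (2 * π))
  rw [hfb, Real.dist_eq, Real.dist_eq] at h3
  norm_num at h3
  linarith

lemma test_bound {f : ℝ → ℝ} (hp : Function.Periodic f (2 * π))
    (hl : LipschitzWith 1 f) (x : ℝ) : |f x| ≤ |f 0| + π := by
  have := periodic_lip_osc hp hl x 0
  have := abs_sub_abs_le_abs_sub (f x) (f 0)
  linarith

lemma test_integrable {f : ℝ → ℝ} (hp : Function.Periodic f (2 * π))
    (hl : LipschitzWith 1 f) (μ : Measure ℝ) [IsProbabilityMeasure μ] :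
    Integrable f μ := by
  refine ⟨hl.continuous.aestronglyMeasurable, ?_⟩
  apply MeasureTheory.HasFiniteIntegral.of_bounded (C := |f 0| + π)
  filter_upwards with x
  simpa [Real.norm_eq_abs] using test_bound hp hl x

/-- helper: integrable since bounded measurable, probability measure -/
lemma integrable_of_bounded_meas {g : ℝ → ℝ} {c : ℝ} (hg : Measurable g)
    (hb : ∀ x, |g x| ≤ c) (μ : Measure ℝ) [IsProbabilityMeasure μ] :
    Integrable g μ := by
  refine ⟨hg.aestronglyMeasurable, ?_⟩
  apply MeasureTheory.HasFiniteIntegral.of_bounded (C := c)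
  filter_upwards with x
  simpa [Real.norm_eq_abs] using hb x

lemma W1_bddAbove (μ ν : Measure ℝ) [IsProbabilityMeasure μ] [IsProbabilityMeasure ν] :
    BddAbove (Set.range fun f : {f : ℝ → ℝ // Function.Periodic f (2 * π) ∧ LipschitzWith 1 f} =>
      (∫ x, f.1 x ∂μ) - ∫ x, f.1 x ∂ν) := by
  refine ⟨2 * π, ?_⟩
  rintro _ ⟨⟨f, hp, hl⟩, rfl⟩
  have h1 : (∫ x, f x ∂μ) ≤ f 0 + π := by
    calc (∫ x, f x ∂μ) ≤ ∫ _, (f 0 + π) ∂μ := by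
          apply integral_mono (test_integrable hp hl μ) (integrable_const _)
          intro x
          have := periodic_lip_osc hp hl x 0
          have := abs_le.1 this
          simp only
          linarith [this.2]
      _ = f 0 + π := by simp
  have h2 : f 0 - π ≤ ∫ x, f x ∂ν := by
    calc f 0 - π = ∫ _, (f 0 - π) ∂ν := by simp
      _ ≤ ∫ x, f x ∂ν := by
          apply integral_mono (integrable_const _) (test_integrable hp hl ν)
          intro x
          have := periodic_lip_osc hp hl x 0
          have := abs_le.1 this
          simp only
          linarith [this.1]
  simp only
  linarith

lemma le_W1 {f : ℝ → ℝ} (hp : Function.Periodic f (2 * π)) (hl : LipschitzWith 1 f)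
    (μ ν : Measure ℝ) [IsProbabilityMeasure μ] [IsProbabilityMeasure ν] :
    (∫ x, f x ∂μ) - ∫ x, f x ∂ν ≤ W1 μ ν :=
  le_ciSup (W1_bddAbove μ ν) ⟨f, hp, hl⟩

lemma W1_nonneg (μ ν : Measure ℝ) [IsProbabilityMeasure μ] [IsProbabilityMeasure ν] :
    0 ≤ W1 μ ν := by
  have hz : LipschitzWith 1 (fun _ : ℝ => (0:ℝ)) :=
    LipschitzWith.of_dist_le_mul fun a b => by simp [dist_nonneg]
  have := le_W1 (f := fun _ => (0:ℝ)) (fun x => rfl) hz μ ν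
  simpa using this

lemma abs_integral_diff_le_W1 {L : ℝ} (hL : 0 ≤ L) {φ : ℝ → ℝ}
    (hp : Function.Periodic φ (2 * π)) (hlip : ∀ a b, |φ a - φ b| ≤ L * |a - b|)
    (μ ν : Measure ℝ) [IsProbabilityMeasure μ] [IsProbabilityMeasure ν] :
    |(∫ x, φ x ∂μ) - ∫ x, φ x ∂ν| ≤ L * W1 μ ν := by
  rcases eq_or_lt_of_le hL with hL0 | hLpos
  · have hφc : φ = fun _ => φ 0 := by
      funext x
      have := hlip x 0
      rw [← hL0] at this
      simp only [zero_mul] at this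
      have := abs_nonpos_iff.1 (le_trans this (le_refl _))
      linarith [sub_eq_zero.1 this]
    rw [hφc]
    simpa using mul_nonneg hL (W1_nonneg μ ν)
  · set ψ : ℝ → ℝ := fun x => L⁻¹ * φ x with hψ
    have hψp : Function.Periodic ψ (2 * π) := fun x => by simp [hψ, hp x]
    have hψl : LipschitzWith 1 ψ := by
      apply LipschitzWith.of_dist_le_mul
      intro a b
      simp only [Real.dist_eq, NNReal.coe_one, one_mul]
      have he : ψ a - ψ b = L⁻¹ * (φ a - φ b) := by rw [hψ]; ring
      rw [he, abs_mul, abs_of_pos (inv_pos.2 hLpos)]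
      calc L⁻¹ * |φ a - φ b| ≤ L⁻¹ * (L * |a - b|) :=
            mul_le_mul_of_nonneg_left (hlip a b) (inv_pos.2 hLpos).le
        _ = |a - b| := by field_simp

    have hψl' : LipschitzWith 1 (fun x => -ψ x) := by
      apply LipschitzWith.of_dist_le_mul
      intro a b
      have h := hψl.dist_le_mul a b
      simp only [Real.dist_eq, NNReal.coe_one, one_mul] at h ⊢
      calc |-ψ a - -ψ b| = |ψ a - ψ b| := by
            rw [show -ψ a - -ψ b = -(ψ a - ψ b) by ring, abs_neg]
        _ ≤ |a - b| := h
    have hψp' : Function.Periodic (fun x => -ψ x) (2 * π) := fun x => by simp [hψp x]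
    have h1 := le_W1 hψp hψl μ ν
    have h2 := le_W1 hψp' hψl' μ ν
    rw [integral_neg, integral_neg] at h2
    have hint : ∀ ρ : Measure ℝ, (∫ x, ψ x ∂ρ) = L⁻¹ * ∫ x, φ x ∂ρ := fun ρ =>
      integral_const_mul _ _
    rw [hint μ, hint ν] at h1 h2
    have h1' : (∫ x, φ x ∂μ) - ∫ x, φ x ∂ν ≤ L * W1 μ ν := by
      have hm := mul_le_mul_of_nonneg_left h1 hLpos.le
      calc (∫ x, φ x ∂μ) - ∫ x, φ x ∂ν
          = L * (L⁻¹ * ∫ x, φ x ∂μ - L⁻¹ * ∫ x, φ x ∂ν) := by field_simp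
        _ ≤ L * W1 μ ν := hm
    have h2' : ((∫ x, φ x ∂ν) - ∫ x, φ x ∂μ) ≤ L * W1 μ ν := by
      have hm := mul_le_mul_of_nonneg_left h2 hLpos.le
      calc (∫ x, φ x ∂ν) - ∫ x, φ x ∂μ
          = L * (-(L⁻¹ * ∫ x, φ x ∂μ) - -(L⁻¹ * ∫ x, φ x ∂ν)) := by field_simp; ring
        _ ≤ L * W1 μ ν := hm
    rw [abs_le]
    constructor <;> linarith

lemma abs_int_le {g : ℝ → ℝ} {μ : Measure ℝ} : |∫ x, g x ∂μ| ≤ ∫ x, |g x| ∂μ := by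
  simpa [Real.norm_eq_abs] using norm_integral_le_integral_norm (μ := μ) g

/-- Dobrushin's stability estimate for the mean-field transformer dynamics on the circle,
in Lagrangian form. -/
theorem dobrushin_lagrangian (β : ℝ) (hβpos : 0 < β)
    (μ₀ ν₀ : Measure ℝ) [IsProbabilityMeasure μ₀] [IsProbabilityMeasure ν₀]
    (T S : ℝ → ℝ → ℝ)
    (hT0 : ∀ x, T 0 x = x) (hS0 : ∀ x, S 0 x = x)
    (hTmeas : ∀ t, 0 ≤ t → Measurable (T t))
    (hSmeas : ∀ t, 0 ≤ t → Measurable (S t))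
    (hTper : ∀ t, 0 ≤ t → ∀ x, T t (x + 2 * π) = T t x + 2 * π)
    (hSper : ∀ t, 0 ≤ t → ∀ x, S t (x + 2 * π) = S t x + 2 * π)
    (hTode : ∀ x : ℝ, ∀ t, 0 ≤ t →
      HasDerivWithinAt (fun s => T s x)
        (∫ y, hBeta' β (T t x - T t y) ∂μ₀) (Set.Ici 0) t)
    (hSode : ∀ x : ℝ, ∀ t, 0 ≤ t →
      HasDerivWithinAt (fun s => S s x)
        (∫ y, hBeta' β (S t x - S t y) ∂ν₀) (Set.Ici 0) t)
    (t : ℝ) (ht : 0 ≤ t) :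
    W1 (μ₀.map (T t)) (ν₀.map (S t)) ≤ Real.exp (2 * CBeta β * t) * W1 μ₀ ν₀ := by
  set C := CBeta β with hCdef
  set M := Real.exp β with hMdef
  set w₀ := W1 μ₀ ν₀ with hwdef
  have hC : 0 ≤ C := CBeta_nonneg β hβpos
  have hM : 0 < M := Real.exp_pos β
  have hw₀ : 0 ≤ w₀ := W1_nonneg μ₀ ν₀
  have hcont : Continuous (hBeta' β) := hBeta'_continuous β hβpos
  have habs : ∀ θ, |hBeta' β θ| ≤ M := hBeta'_abs_le β hβpos
  have hlipB : ∀ a b, |hBeta' β a - hBeta' β b| ≤ C * |a - b| := hBeta'_lip β hβpos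
  have hperB : Function.Periodic (hBeta' β) (2 * π) := hBeta'_periodic β hβpos
  -- integrability of kernel compositions
  have hintT : ∀ s, 0 ≤ s → ∀ z : ℝ, Integrable (fun y => hBeta' β (z - T s y)) μ₀ :=
    fun s hs z => integrable_of_bounded_meas
      (hcont.measurable.comp (measurable_const.sub (hTmeas s hs))) (fun y => habs _) μ₀
  have hintS : ∀ s, 0 ≤ s → ∀ z : ℝ, Integrable (fun y => hBeta' β (z - S s y)) ν₀ :=
    fun s hs z => integrable_of_bounded_meas
      (hcont.measurable.comp (measurable_const.sub (hSmeas s hs))) (fun y => habs _) ν₀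
  have hintSμ : ∀ s, 0 ≤ s → ∀ z : ℝ, Integrable (fun y => hBeta' β (z - S s y)) μ₀ :=
    fun s hs z => integrable_of_bounded_meas
      (hcont.measurable.comp (measurable_const.sub (hSmeas s hs))) (fun y => habs _) μ₀
  have hintTμ2 : ∀ s, 0 ≤ s → ∀ z : ℝ, Integrable (fun y => hBeta' β (z - T s y)) μ₀ := hintT
  -- |∫ g| ≤ M for probability measure, |g| ≤ M pointwise
  have habs_int : ∀ (ρ : Measure ℝ) [IsProbabilityMeasure ρ] (g : ℝ → ℝ),
      Integrable g ρ → (∀ y, |g y| ≤ M) → |∫ y, g y ∂ρ| ≤ M := by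
    intro ρ _ g hg hb
    calc |∫ y, g y ∂ρ| ≤ ∫ y, |g y| ∂ρ := abs_int_le
      _ ≤ ∫ _y, M ∂ρ := integral_mono hg.abs (integrable_const _) hb
      _ = M := by simp
  -- time Lipschitz bounds
  have hTtime : ∀ x s z, 0 ≤ s → s ≤ z → |T z x - T s x| ≤ M * (z - s) := by
    intro x s z hs hsz
    have h := Convex.norm_image_sub_le_of_norm_hasDerivWithin_le
      (f := fun r => T r x) (f' := fun r => ∫ y, hBeta' β (T r x - T r y) ∂μ₀)
      (s := Set.Icc s z) (C := M)
      (fun r hr => (hTode x r (le_trans hs hr.1)).mono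
        (fun a ha => le_trans hs ha.1))
      (fun r hr => by
        rw [Real.norm_eq_abs]
        exact habs_int μ₀ _ (hintT r (le_trans hs hr.1) _) (fun y => habs _))
      (convex_Icc s z) (Set.left_mem_Icc.2 hsz) (Set.right_mem_Icc.2 hsz)
    rw [Real.norm_eq_abs, Real.norm_eq_abs, abs_of_nonneg (by linarith : (0:ℝ) ≤ z - s)] at h
    exact h
  have hStime : ∀ x s z, 0 ≤ s → s ≤ z → |S z x - S s x| ≤ M * (z - s) := by
    intro x s z hs hsz
    have h := Convex.norm_image_sub_le_of_norm_hasDerivWithin_le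
      (f := fun r => S r x) (f' := fun r => ∫ y, hBeta' β (S r x - S r y) ∂ν₀)
      (s := Set.Icc s z) (C := M)
      (fun r hr => (hSode x r (le_trans hs hr.1)).mono
        (fun a ha => le_trans hs ha.1))
      (fun r hr => by
        rw [Real.norm_eq_abs]
        exact habs_int ν₀ _ (hintS r (le_trans hs hr.1) _) (fun y => habs _))
      (convex_Icc s z) (Set.left_mem_Icc.2 hsz) (Set.right_mem_Icc.2 hsz)
    rw [Real.norm_eq_abs, Real.norm_eq_abs, abs_of_nonneg (by linarith : (0:ℝ) ≤ z - s)] at h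
    exact h
  -- spatial contraction of S
  have hScontr : ∀ x y s, 0 ≤ s → |S s x - S s y| ≤ Real.exp (C * s) * |x - y| := by
    intro x y s hs
    have key := norm_le_gronwallBound_of_norm_deriv_right_le
      (f := fun r => S r x - S r y)
      (f' := fun r => (∫ w, hBeta' β (S r x - S r w) ∂ν₀) - ∫ w, hBeta' β (S r y - S r w) ∂ν₀)
      (δ := |x - y|) (K := C) (ε := 0) (a := 0) (b := s)
      (fun r (hr : r ∈ Set.Icc 0 s) =>
        (((hSode x r hr.1).sub (hSode y r hr.1)).continuousWithinAt).mono
          Set.Icc_subset_Ici_self)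
      (fun r hr => ((hSode x r hr.1).mono (fun a (ha : a ∈ Set.Ici r) => le_trans hr.1 ha)).sub
        ((hSode y r hr.1).mono (fun a (ha : a ∈ Set.Ici r) => le_trans hr.1 ha)))
      (by simp [hS0, Real.norm_eq_abs])
      (fun r hr => by
        show ‖(∫ w, hBeta' β (S r x - S r w) ∂ν₀) - ∫ w, hBeta' β (S r y - S r w) ∂ν₀‖
          ≤ C * ‖S r x - S r y‖ + 0
        rw [Real.norm_eq_abs, Real.norm_eq_abs]
        have hsub : (∫ w, hBeta' β (S r x - S r w) ∂ν₀) - ∫ w, hBeta' β (S r y - S r w) ∂ν₀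
            = ∫ w, (hBeta' β (S r x - S r w) - hBeta' β (S r y - S r w)) ∂ν₀ :=
          (integral_sub (hintS r hr.1 _) (hintS r hr.1 _)).symm
        rw [hsub]
        calc |∫ w, (hBeta' β (S r x - S r w) - hBeta' β (S r y - S r w)) ∂ν₀|
            ≤ ∫ w, |hBeta' β (S r x - S r w) - hBeta' β (S r y - S r w)| ∂ν₀ :=
              abs_int_le
          _ ≤ ∫ _w, C * |S r x - S r y| ∂ν₀ := by
              apply integral_mono ((hintS r hr.1 _).sub (hintS r hr.1 _)).abs
                (integrable_const _)
              intro w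
              have := hlipB (S r x - S r w) (S r y - S r w)
              simpa [sub_sub_sub_cancel_right] using this
          _ = C * |S r x - S r y| := by simp
          _ ≤ C * |S r x - S r y| + 0 := by linarith)
    have h := key s (Set.right_mem_Icc.2 hs)
    rw [Real.norm_eq_abs] at h
    rw [gronwallBound_ε0] at h
    calc |S s x - S s y| ≤ |x - y| * Real.exp (C * (s - 0)) := h
      _ = Real.exp (C * s) * |x - y| := by rw [sub_zero]; ring
  -- pointwise bound on |T s x - S s x|
  have hu_bound : ∀ s, 0 ≤ s → ∀ x, |T s x - S s x| ≤ 2 * M * s := by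
    intro s hs x
    have h1 := hTtime x 0 s le_rfl hs
    have h2 := hStime x 0 s le_rfl hs
    rw [hT0] at h1; rw [hS0] at h2
    have heq : T s x - S s x = (T s x - x) - (S s x - x) := by ring
    rw [heq]
    calc |(T s x - x) - (S s x - x)| ≤ |T s x - x| + |S s x - x| := abs_sub _ _
      _ ≤ M * (s - 0) + M * (s - 0) := add_le_add h1 h2
      _ = 2 * M * s := by ring
  set D : ℝ → ℝ := fun s => ∫ x, |T s x - S s x| ∂μ₀ with hDdef
  have hDint : ∀ s, 0 ≤ s → Integrable (fun x => |T s x - S s x|) μ₀ := fun s hs =>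
    integrable_of_bounded_meas ((hTmeas s hs).sub (hSmeas s hs)).abs
      (fun x => by rw [abs_abs]; exact hu_bound s hs x) μ₀
  have hD_nonneg : ∀ s, 0 ≤ D s := fun s =>
    integral_nonneg (fun x => abs_nonneg _)
  have hD_lip : ∀ s z, 0 ≤ s → s ≤ z → |D z - D s| ≤ 2 * M * (z - s) := by
    intro s z hs hsz
    have hz : 0 ≤ z := le_trans hs hsz
    have hsub : D z - D s = ∫ x, (|T z x - S z x| - |T s x - S s x|) ∂μ₀ :=
      (integral_sub (hDint z hz) (hDint s hs)).symm
    rw [hsub]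
    calc |∫ x, (|T z x - S z x| - |T s x - S s x|) ∂μ₀|
        ≤ ∫ x, |(|T z x - S z x| - |T s x - S s x|)| ∂μ₀ := abs_int_le
      _ ≤ ∫ _x, 2 * M * (z - s) ∂μ₀ := by
          apply integral_mono ((hDint z hz).sub (hDint s hs)).abs (integrable_const _)
          intro x
          have h1 : |(|T z x - S z x| - |T s x - S s x|)| ≤ |(T z x - S z x) - (T s x - S s x)| :=
            abs_abs_sub_abs_le_abs_sub _ _
          have heq : (T z x - S z x) - (T s x - S s x) = (T z x - T s x) - (S z x - S s x) := by
            ring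
          have h2 : |(T z x - T s x) - (S z x - S s x)| ≤ |T z x - T s x| + |S z x - S s x| :=
            abs_sub _ _
          have h3 := hTtime x s z hs hsz
          have h4 := hStime x s z hs hsz
          simp only
          rw [heq] at h1
          calc |(|T z x - S z x| - |T s x - S s x|)| ≤ |T z x - T s x| + |S z x - S s x| :=
                le_trans h1 h2
            _ ≤ M * (z - s) + M * (z - s) := add_le_add h3 h4
            _ = 2 * M * (z - s) := by ring
      _ = 2 * M * (z - s) := by simp
  have hD_cont : ContinuousOn D (Set.Ici 0) := by
    have : LipschitzOnWith (2 * M).toNNReal D (Set.Ici 0) := by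
      rw [lipschitzOnWith_iff_dist_le_mul]
      intro a ha b hb
      rw [Real.dist_eq, Real.dist_eq, Real.coe_toNNReal _ (by positivity)]
      rcases le_total a b with hab | hab
      · rw [abs_sub_comm a b, abs_of_nonneg (sub_nonneg.2 hab), abs_sub_comm (D a) (D b)]
        exact hD_lip a b ha hab
      · rw [abs_of_nonneg (sub_nonneg.2 hab)]
        exact hD_lip b a hb hab
    exact this.continuousOn
  -- velocity difference bound
  have hvel : ∀ ρ, 0 ≤ ρ → ∀ x,
      |(∫ y, hBeta' β (T ρ x - T ρ y) ∂μ₀) - ∫ y, hBeta' β (S ρ x - S ρ y) ∂ν₀|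
        ≤ C * |T ρ x - S ρ x| + C * D ρ + C * Real.exp (C * ρ) * w₀ := by
    intro ρ hρ x
    set A := ∫ y, hBeta' β (T ρ x - T ρ y) ∂μ₀ with hA
    set A1 := ∫ y, hBeta' β (S ρ x - T ρ y) ∂μ₀ with hA1
    set A2 := ∫ y, hBeta' β (S ρ x - S ρ y) ∂μ₀ with hA2
    set B := ∫ y, hBeta' β (S ρ x - S ρ y) ∂ν₀ with hB
    have h1 : |A - A1| ≤ C * |T ρ x - S ρ x| := by
      rw [hA, hA1, ← integral_sub (hintT ρ hρ _) (hintT ρ hρ _)]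
      calc |∫ y, (hBeta' β (T ρ x - T ρ y) - hBeta' β (S ρ x - T ρ y)) ∂μ₀|
          ≤ ∫ y, |hBeta' β (T ρ x - T ρ y) - hBeta' β (S ρ x - T ρ y)| ∂μ₀ := abs_int_le
        _ ≤ ∫ _y, C * |T ρ x - S ρ x| ∂μ₀ := by
            apply integral_mono ((hintT ρ hρ _).sub (hintT ρ hρ _)).abs (integrable_const _)
            intro y
            simpa [sub_sub_sub_cancel_right] using hlipB (T ρ x - T ρ y) (S ρ x - T ρ y)
        _ = C * |T ρ x - S ρ x| := by simp
    have h2 : |A1 - A2| ≤ C * D ρ := by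
      rw [hA1, hA2, ← integral_sub (hintT ρ hρ _) (hintSμ ρ hρ _)]
      calc |∫ y, (hBeta' β (S ρ x - T ρ y) - hBeta' β (S ρ x - S ρ y)) ∂μ₀|
          ≤ ∫ y, |hBeta' β (S ρ x - T ρ y) - hBeta' β (S ρ x - S ρ y)| ∂μ₀ := abs_int_le
        _ ≤ ∫ y, C * |T ρ y - S ρ y| ∂μ₀ := by
            apply integral_mono ((hintT ρ hρ _).sub (hintSμ ρ hρ _)).abs
              ((hDint ρ hρ).const_mul C)
            intro y
            have h := hlipB (S ρ x - T ρ y) (S ρ x - S ρ y)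
            have harg : (S ρ x - T ρ y) - (S ρ x - S ρ y) = S ρ y - T ρ y := by ring
            rw [harg, abs_sub_comm (S ρ y) (T ρ y)] at h
            exact h
        _ = C * D ρ := by rw [integral_const_mul]
    have h3 : |A2 - B| ≤ C * Real.exp (C * ρ) * w₀ := by
      have hLnn : 0 ≤ C * Real.exp (C * ρ) := mul_nonneg hC (Real.exp_pos _).le
      have hp : Function.Periodic (fun y => hBeta' β (S ρ x - S ρ y)) (2 * π) := by
        intro y
        simp only
        rw [hSper ρ hρ y]
        have harg : S ρ x - (S ρ y + 2 * π) = (S ρ x - S ρ y) - 2 * π := by ring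
        rw [harg, hperB.sub_eq]
      have hlipφ : ∀ a b, |hBeta' β (S ρ x - S ρ a) - hBeta' β (S ρ x - S ρ b)|
          ≤ (C * Real.exp (C * ρ)) * |a - b| := by
        intro a b
        have h := hlipB (S ρ x - S ρ a) (S ρ x - S ρ b)
        have harg : (S ρ x - S ρ a) - (S ρ x - S ρ b) = S ρ b - S ρ a := by ring
        rw [harg] at h
        have h2 := hScontr b a ρ hρ
        calc |hBeta' β (S ρ x - S ρ a) - hBeta' β (S ρ x - S ρ b)|
            ≤ C * |S ρ b - S ρ a| := h
          _ ≤ C * (Real.exp (C * ρ) * |b - a|) := mul_le_mul_of_nonneg_left h2 hC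
          _ = (C * Real.exp (C * ρ)) * |a - b| := by rw [abs_sub_comm b a]; ring
      have := abs_integral_diff_le_W1 hLnn hp hlipφ μ₀ ν₀
      rw [hA2, hB]
      exact this
    have htri := abs_sub_le A A1 B
    have htri2 := abs_sub_le A1 A2 B
    linarith
  -- increment / slope bound for D
  have hslope : ∀ s z, 0 ≤ s → s < z →
      (z - s)⁻¹ * (D z - D s) ≤ 2*C*D s + C*Real.exp (C*z)*w₀ + 4*C*M*(z - s) := by
    intro s z hs hz
    have hz0 : 0 ≤ z := le_trans hs hz.le
    have hsubI : Set.Icc s z ⊆ Set.Ici (0:ℝ) := fun a ha => le_trans hs ha.1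
    have key : ∀ x, |T z x - S z x| ≤ |T s x - S s x|
        + (C * |T s x - S s x| + (C * D s + C * Real.exp (C*z) * w₀ + 4*C*M*(z - s))) * (z - s) := by
      intro x
      set Kx := C * |T s x - S s x| + (C * D s + C * Real.exp (C*z) * w₀ + 4*C*M*(z-s)) with hKx
      have hmvt := Convex.norm_image_sub_le_of_norm_hasDerivWithin_le
        (f := fun r => T r x - S r x)
        (f' := fun r => (∫ y, hBeta' β (T r x - T r y) ∂μ₀) - ∫ y, hBeta' β (S r x - S r y) ∂ν₀)
        (s := Set.Icc s z) (C := Kx)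
        (fun r hr => ((hTode x r (hsubI hr)).mono hsubI).sub ((hSode x r (hsubI hr)).mono hsubI))
        (fun r hr => by
          show ‖(∫ y, hBeta' β (T r x - T r y) ∂μ₀) - ∫ y, hBeta' β (S r x - S r y) ∂ν₀‖ ≤ Kx
          rw [Real.norm_eq_abs]
          have hr0 : 0 ≤ r := hsubI hr
          have h0 := hvel r hr0 x
          have hts : |T r x - S r x| ≤ |T s x - S s x| + 2 * M * (r - s) := by
            have h1 := hTtime x s r hs hr.1
            have h2 := hStime x s r hs hr.1
            have h3 : |T r x - S r x| - |T s x - S s x|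
                ≤ |(T r x - S r x) - (T s x - S s x)| :=
              abs_sub_abs_le_abs_sub _ _
            have heq : (T r x - S r x) - (T s x - S s x) = (T r x - T s x) - (S r x - S s x) := by
              ring
            rw [heq] at h3
            have h4 : |(T r x - T s x) - (S r x - S s x)| ≤ |T r x - T s x| + |S r x - S s x| :=
              abs_sub _ _
            linarith
          have hDr : D r ≤ D s + 2 * M * (r - s) := by
            have h5 := hD_lip s r hs hr.1
            have := (abs_le.1 h5).2
            linarith
          have hexp : Real.exp (C * r) ≤ Real.exp (C * z) :=
            Real.exp_le_exp.2 (mul_le_mul_of_nonneg_left hr.2 hC)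
          have hrs : r - s ≤ z - s := by linarith [hr.2]
          have e1 := mul_le_mul_of_nonneg_left hts hC
          have e2 := mul_le_mul_of_nonneg_left hDr hC
          have e3 : C * Real.exp (C*r) * w₀ ≤ C * Real.exp (C*z) * w₀ :=
            mul_le_mul_of_nonneg_right (mul_le_mul_of_nonneg_left hexp hC) hw₀
          have e4 : 2*(C*M) * (r-s) ≤ 2*(C*M) * (z-s) :=
            mul_le_mul_of_nonneg_left hrs (by positivity)
          rw [hKx]
          nlinarith [e1, e2, e3, e4, h0])
        (convex_Icc s z) (Set.left_mem_Icc.2 hz.le) (Set.right_mem_Icc.2 hz.le)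
      rw [Real.norm_eq_abs, Real.norm_eq_abs, abs_of_nonneg (by linarith : (0:ℝ) ≤ z - s)] at hmvt
      have htr : |T z x - S z x| - |T s x - S s x|
          ≤ |(T z x - S z x) - (T s x - S s x)| := abs_sub_abs_le_abs_sub _ _
      rw [hKx]
      have hmvt' : |(fun r => T r x - S r x) z - (fun r => T r x - S r x) s| ≤ Kx * (z - s) := hmvt
      simp only at hmvt'
      rw [hKx] at hmvt'
      linarith
    have hint2 : Integrable (fun x => |T s x - S s x|
        + (C * |T s x - S s x| + (C * D s + C * Real.exp (C*z) * w₀ + 4*C*M*(z - s))) * (z - s)) μ₀ := by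
      apply (hDint s hs).add
      exact ((((hDint s hs).const_mul C).add (integrable_const _)).mul_const _)
    have hmono := integral_mono (hDint z hz0) hint2 key
    have hrhs : ∫ x, (|T s x - S s x|
        + (C * |T s x - S s x| + (C * D s + C * Real.exp (C*z) * w₀ + 4*C*M*(z - s))) * (z - s)) ∂μ₀
        = D s + (C * D s + (C * D s + C * Real.exp (C*z) * w₀ + 4*C*M*(z - s))) * (z - s) := by
      have hiB : Integrable (fun x => C * |T s x - S s x|
          + (C * D s + C * Real.exp (C*z) * w₀ + 4*C*M*(z - s))) μ₀ :=
        ((hDint s hs).const_mul C).add (integrable_const _)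
      have hiA : Integrable (fun x => (C * |T s x - S s x|
          + (C * D s + C * Real.exp (C*z) * w₀ + 4*C*M*(z - s))) * (z - s)) μ₀ :=
        hiB.mul_const _
      have hiC : Integrable (fun x => C * |T s x - S s x|) μ₀ := (hDint s hs).const_mul C
      rw [integral_add (hDint s hs) hiA, integral_mul_const, integral_add hiC (integrable_const _),
        integral_const_mul, integral_const]
      simp [measure_univ]
      rfl
    rw [hrhs] at hmono
    have hzs : (0:ℝ) < z - s := by linarith
    have h2 : D z - D s ≤ (z - s) * (2*C*D s + C*Real.exp (C*z)*w₀ + 4*C*M*(z - s)) := by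
      nlinarith [hmono]
    calc (z - s)⁻¹ * (D z - D s)
        ≤ (z - s)⁻¹ * ((z - s) * (2*C*D s + C*Real.exp (C*z)*w₀ + 4*C*M*(z - s))) :=
          mul_le_mul_of_nonneg_left h2 (inv_nonneg.2 hzs.le)
      _ = 2*C*D s + C*Real.exp (C*z)*w₀ + 4*C*M*(z - s) := by
          field_simp
  -- Gronwall for H = exp(-Cs) * D s
  set H : ℝ → ℝ := fun s => Real.exp (-(C * s)) * D s with hHdef
  have hH_cont : ContinuousOn H (Set.Icc 0 t) := by
    apply ContinuousOn.mul
    · exact (Real.continuous_exp.comp ((continuous_const.mul continuous_id).neg)).continuousOn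
    · exact hD_cont.mono (fun a ha => ha.1)
  have hslopecond : ∀ s ∈ Set.Ico 0 t, ∀ r, (fun s => C * H s + C * w₀) s < r →
      ∃ᶠ z in nhdsWithin s (Set.Ioi s), (z - s)⁻¹ * (H z - H s) < r := by
    intro s hsIco r hr
    simp only at hr
    set g : ℝ → ℝ := fun z => Real.exp (-(C * z)) * (2*C*D s + C*Real.exp (C*z)*w₀ + 4*C*M*(z - s))
        + D s * ((z - s)⁻¹ * (Real.exp (-(C * z)) - Real.exp (-(C * s)))) with hgdef
    have hineq : ∀ z, s < z → (z - s)⁻¹ * (H z - H s) ≤ g z := by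
      intro z hz
      have hzs : (0:ℝ) < z - s := by linarith
      have h1 := hslope s z hsIco.1 hz
      have hsplit : (z - s)⁻¹ * (H z - H s)
          = Real.exp (-(C * z)) * ((z - s)⁻¹ * (D z - D s))
            + D s * ((z - s)⁻¹ * (Real.exp (-(C * z)) - Real.exp (-(C * s)))) := by
        simp only [hHdef]
        field_simp
        ring
      rw [hsplit, hgdef]
      have hmul := mul_le_mul_of_nonneg_left h1 (Real.exp_nonneg (-(C * z)))
      simp only
      linarith
    have hd : HasDerivAt (fun z => Real.exp (-(C * z))) (-C * Real.exp (-(C * s))) s := by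
      have h1 : HasDerivAt (fun z : ℝ => -(C * z)) (-C) s := by
        exact HasDerivAt.neg (f := fun z => C * z) (by simpa using (hasDerivAt_id s).const_mul C)
      simpa [mul_comm] using h1.exp
    have htendslope : Tendsto (fun z => (z - s)⁻¹ * (Real.exp (-(C * z)) - Real.exp (-(C * s))))
        (nhdsWithin s (Set.Ioi s)) (nhds (-C * Real.exp (-(C * s)))) := by
      have h2 := hasDerivAt_iff_tendsto_slope.1 hd
      have h3 := h2.mono_left (nhdsWithin_mono s (fun z (hz : z ∈ Set.Ioi s) => ne_of_gt hz))
      refine h3.congr (fun z => ?_)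
      simp [slope, vsub_eq_sub, smul_eq_mul, div_eq_inv_mul]
    have htend1 : Tendsto
        (fun z => Real.exp (-(C * z)) * (2*C*D s + C*Real.exp (C*z)*w₀ + 4*C*M*(z - s)))
        (nhdsWithin s (Set.Ioi s))
        (nhds (Real.exp (-(C * s)) * (2*C*D s + C*Real.exp (C*s)*w₀ + 4*C*M*(s - s)))) := by
      have hc1 : Continuous fun z : ℝ => Real.exp (-(C * z)) :=
        Real.continuous_exp.comp ((continuous_const.mul continuous_id).neg)
      have hc2 : Continuous fun z : ℝ => C*Real.exp (C*z)*w₀ :=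
        ((continuous_const.mul (Real.continuous_exp.comp (continuous_const.mul continuous_id))).mul
          continuous_const)
      have hc3 : Continuous fun z : ℝ => 4*C*M*(z - s) :=
        continuous_const.mul (continuous_id.sub continuous_const)
      have hcg : Continuous
          (fun z => Real.exp (-(C * z)) * (2*C*D s + C*Real.exp (C*z)*w₀ + 4*C*M*(z - s))) :=
        hc1.mul ((continuous_const.add hc2).add hc3)
      exact (hcg.tendsto s).mono_left nhdsWithin_le_nhds
    have htendg : Tendsto g (nhdsWithin s (Set.Ioi s)) (nhds (C * H s + C * w₀)) := by
      have hsum := htend1.add (htendslope.const_mul (D s))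
      have hval : Real.exp (-(C * s)) * (2*C*D s + C*Real.exp (C*s)*w₀ + 4*C*M*(s - s))
          + D s * (-C * Real.exp (-(C * s))) = C * H s + C * w₀ := by
        have hE : Real.exp (-(C * s)) * Real.exp (C * s) = 1 := by
          rw [← Real.exp_add]; simp
        simp only [hHdef]
        linear_combination (C*w₀) * hE
      rw [← hval]
      exact hsum
    have hev : ∀ᶠ z in nhdsWithin s (Set.Ioi s), (z - s)⁻¹ * (H z - H s) < r := by
      filter_upwards [htendg.eventually_lt_const hr, self_mem_nhdsWithin] with z h1 h2
      exact lt_of_le_of_lt (hineq z h2) h1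
    exact hev.frequently
  have hH0 : H 0 ≤ 0 := by
    simp only [hHdef, hDdef]
    simp [hT0, hS0]
  have hgron := le_gronwallBound_of_liminf_deriv_right_le (f := H)
    (f' := fun s => C * H s + C * w₀) (δ := 0) (K := C) (ε := C * w₀) (a := 0) (b := t)
    hH_cont hslopecond hH0 (fun s _ => le_refl _) t (Set.right_mem_Icc.2 ht)
  have hgb : gronwallBound 0 C (C * w₀) (t - 0) ≤ w₀ * (Real.exp (C * t) - 1) := by
    rw [sub_zero]
    by_cases hC0 : C = 0
    · rw [hC0, gronwallBound_K0]
      simp [hC0]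
    · rw [gronwallBound_of_K_ne_0 hC0]
      field_simp
      simp
  have hDt : D t ≤ Real.exp (C * t) * (w₀ * (Real.exp (C * t) - 1)) := by
    have hE : Real.exp (C*t) * Real.exp (-(C*t)) = 1 := by rw [← Real.exp_add]; simp
    have h1 : D t = Real.exp (C * t) * H t := by
      simp only [hHdef]
      rw [← mul_assoc, hE, one_mul]
    rw [h1]
    exact mul_le_mul_of_nonneg_left (le_trans hgron hgb) (Real.exp_nonneg _)
  -- final assembly
  haveI : Nonempty {f : ℝ → ℝ // Function.Periodic f (2 * π) ∧ LipschitzWith 1 f} :=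
    ⟨⟨fun _ => 0, fun x => rfl, LipschitzWith.of_dist_le_mul fun a b => by simp [dist_nonneg]⟩⟩
  show (⨆ f : {f : ℝ → ℝ // Function.Periodic f (2 * π) ∧ LipschitzWith 1 f},
      ((∫ x, f.1 x ∂(μ₀.map (T t))) - ∫ x, f.1 x ∂(ν₀.map (S t)))) ≤ _
  refine ciSup_le fun fp => ?_
  obtain ⟨f, hp, hl⟩ := fp
  show (∫ x, f x ∂(μ₀.map (T t))) - ∫ x, f x ∂(ν₀.map (S t)) ≤ _
  rw [integral_map (hTmeas t ht).aemeasurable hl.continuous.aestronglyMeasurable,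
    integral_map (hSmeas t ht).aemeasurable hl.continuous.aestronglyMeasurable]
  have hfb : ∀ y, |f y| ≤ |f 0| + π := test_bound hp hl
  have hintfT : Integrable (fun x => f (T t x)) μ₀ :=
    integrable_of_bounded_meas (hl.continuous.measurable.comp (hTmeas t ht)) (fun x => hfb _) μ₀
  have hintfS : Integrable (fun x => f (S t x)) μ₀ :=
    integrable_of_bounded_meas (hl.continuous.measurable.comp (hSmeas t ht)) (fun x => hfb _) μ₀
  have h1 : (∫ x, f (T t x) ∂μ₀) - (∫ x, f (S t x) ∂μ₀) ≤ D t := by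
    rw [← integral_sub hintfT hintfS]
    calc (∫ x, (f (T t x) - f (S t x)) ∂μ₀) ≤ ∫ x, |T t x - S t x| ∂μ₀ := by
          apply integral_mono (hintfT.sub hintfS) (hDint t ht)
          intro x
          have hll := hl.dist_le_mul (T t x) (S t x)
          rw [Real.dist_eq, Real.dist_eq] at hll
          norm_num at hll
          exact le_trans (le_abs_self _) hll
      _ = D t := rfl
  have h2 : (∫ x, f (S t x) ∂μ₀) - (∫ x, f (S t x) ∂ν₀) ≤ Real.exp (C * t) * w₀ := by
    have hp2 : Function.Periodic (fun x => f (S t x)) (2 * π) := by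
      intro x
      simp only
      rw [hSper t ht x, hp (S t x)]
    have hlip2 : ∀ a b, |f (S t a) - f (S t b)| ≤ Real.exp (C * t) * |a - b| := by
      intro a b
      have h3 := hl.dist_le_mul (S t a) (S t b)
      rw [Real.dist_eq, Real.dist_eq] at h3
      norm_num at h3
      exact le_trans h3 (hScontr a b t ht)
    have h4 := abs_integral_diff_le_W1 (Real.exp_nonneg _) hp2 hlip2 μ₀ ν₀
    have := (abs_le.1 h4).2
    linarith
  have hexp2 : Real.exp (C*t) * Real.exp (C*t) = Real.exp (2*C*t) := by
    rw [← Real.exp_add]; ring_nf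
  nlinarith [h1, h2, hDt, hexp2]
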